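/- Let p be an odd prime and n = r(p−1) with 1 ≤ r < p. Then G_n(p) = ∑_{a=1}^{p-1} ∑_{b=1}^{p-1} (a+bi)^n satisfies G_n(p) ≡ 1 + i^{r(p−1)} (mod p) in ℤ[i]. -/

import Mathlib

noncomputable section

/-- `i` in the Gaussian integers. -/
def Ig : GaussianInt := ⟨0, 1⟩

/-- Classical power sum `S_r(N) = ∑_{t=1}^N t^r`. -/
def Sps (r N : ℕ) : ℤ := ∑ t ∈ Finset.Icc 1 N, (t : ℤ) ^ r

/-- Gaussian power sum `F_n(k,m) = ∑_{a=1}^k ∑_{b=1}^m (a+bi)^n`. -/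
def Fg (n k m : ℕ) : GaussianInt :=
  ∑ a ∈ Finset.Icc 1 k, ∑ b ∈ Finset.Icc 1 m, ((a : GaussianInt) + (b : GaussianInt) * Ig) ^ n

/-- Square Gaussian power sum `G_n(N) = F_n(N-1,N-1)`. -/
def Gg (n N : ℕ) : GaussianInt := Fg n (N - 1) (N - 1)

open Finset

lemma sum_range_cast (p : ℕ) [NeZero p] (f : ZMod p → ZMod p) :
    ∑ t ∈ Finset.range p, f t = ∑ x : ZMod p, f x := by
  refine Finset.sum_nbij' (fun t => (t : ZMod p)) (fun x => x.val) ?_ ?_ ?_ ?_ ?_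
  · intro a _; exact Finset.mem_univ _
  · intro x _; exact Finset.mem_range.2 (ZMod.val_lt x)
  · intro a ha; exact ZMod.val_cast_of_lt (Finset.mem_range.1 ha)
  · intro x _; exact ZMod.natCast_rightInverse x
  · intro a _; rfl

lemma powsum_mod (p : ℕ) (hp : p.Prime) (k : ℕ) :
    ((Sps k (p - 1) : ℤ) : ZMod p) = if (p - 1) ∣ k then -1 else 0 := by
  haveI : Fact p.Prime := ⟨hp⟩
  have hp1 : 1 ≤ p := hp.one_le
  have hpz : ((p : ℕ) : ZMod p) = 0 := ZMod.natCast_self p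
  rcases Nat.eq_zero_or_pos k with rfl | hk
  · simp only [Sps, pow_zero, Finset.sum_const, Nat.card_Icc, nsmul_eq_mul, mul_one,
      Nat.dvd_zero, if_true]
    push_cast [Nat.cast_sub hp1]
    rw [hpz]; ring
  · have h1 : ((Sps k (p - 1) : ℤ) : ZMod p) = ∑ t ∈ Finset.Icc 1 (p - 1), (t : ZMod p) ^ k := by
      unfold Sps; push_cast; rfl
    have h0 : Finset.range p = insert 0 (Finset.Icc 1 (p - 1)) := by
      ext t
      simp only [Finset.mem_range, Finset.mem_insert, Finset.mem_Icc]
      omega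
    have h2 : ∑ t ∈ Finset.Icc 1 (p - 1), (t : ZMod p) ^ k
        = ∑ t ∈ Finset.range p, (t : ZMod p) ^ k := by
      rw [h0, Finset.sum_insert (by simp)]
      simp [zero_pow hk.ne']
    have h3 : ∑ t ∈ Finset.range p, ((t : ZMod p)) ^ k = ∑ x : ZMod p, x ^ k :=
      sum_range_cast p (fun x => x ^ k)
    classical
    have himg : (Finset.univ.image (fun u : (ZMod p)ˣ => (u : ZMod p)))
        = Finset.univ \ {0} := by
      ext x
      simp only [Finset.mem_image, Finset.mem_univ, true_and, Finset.mem_sdiff,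
        Finset.mem_singleton]
      constructor
      · rintro ⟨u, rfl⟩; exact u.ne_zero
      · rintro hx; exact ⟨Units.mk0 x hx, rfl⟩
    have h4 : ∑ x : ZMod p, x ^ k = ∑ x ∈ Finset.univ \ {0}, x ^ k := by
      refine (Finset.sum_subset Finset.sdiff_subset ?_).symm
      intro x _ hx
      have hx0 : x = 0 := by simpa using hx
      simp [hx0, zero_pow hk.ne']
    have h5 : ∑ x ∈ Finset.univ \ {0}, x ^ k = ∑ u : (ZMod p)ˣ, ((u : ZMod p)) ^ k := by
      rw [← himg, Finset.sum_image]
      intro a _ b _ h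
      exact Units.ext h
    have h6 := FiniteField.sum_pow_units (ZMod p) k
    rw [ZMod.card] at h6
    rw [h1, h2, h3, h4, h5, h6]

lemma lucas_vanish (p r t : ℕ) (hp : p.Prime) (ht0 : 0 < t) (htr : t < r) (hrp : r < p) :
    p ∣ Nat.choose (r * (p - 1)) (t * (p - 1)) := by
  haveI : Fact p.Prime := ⟨hp⟩
  obtain ⟨r', rfl⟩ : ∃ r', r = r' + 1 := ⟨r - 1, by omega⟩
  obtain ⟨t', rfl⟩ : ∃ t', t = t' + 1 := ⟨t - 1, by omega⟩
  have hpp : 0 < p := hp.pos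
  have hkey : ∀ s : ℕ, s + 1 < p → (s + 1) * (p - 1) = s * p + (p - s - 1) := by
    intro s hs
    have h1 : 1 ≤ p := hp.one_le
    zify [h1, (by omega : s ≤ p), (by omega : 1 ≤ p - s)]
    ring
  have hmodn : (r' + 1) * (p - 1) % p = p - r' - 1 := by
    rw [hkey r' hrp, Nat.add_comm, Nat.add_mul_mod_self_right, Nat.mod_eq_of_lt (by omega)]
  have hdivn : (r' + 1) * (p - 1) / p = r' := by
    rw [hkey r' hrp, Nat.add_comm, Nat.add_mul_div_right _ _ hpp, Nat.div_eq_of_lt (by omega),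
      Nat.zero_add]
  have hmodk : (t' + 1) * (p - 1) % p = p - t' - 1 := by
    rw [hkey t' (by omega), Nat.add_comm, Nat.add_mul_mod_self_right, Nat.mod_eq_of_lt (by omega)]
  have hdivk : (t' + 1) * (p - 1) / p = t' := by
    rw [hkey t' (by omega), Nat.add_comm, Nat.add_mul_div_right _ _ hpp, Nat.div_eq_of_lt (by omega),
      Nat.zero_add]
  have h := Choose.choose_modEq_choose_mod_mul_choose_div
    (p := p) (n := (r' + 1) * (p - 1)) (k := (t' + 1) * (p - 1))
  rw [hmodn, hdivn, hmodk, hdivk] at h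
  have hz : Nat.choose (p - r' - 1) (p - t' - 1) = 0 :=
    Nat.choose_eq_zero_of_lt (by omega)
  rw [hz] at h
  simp only [Nat.cast_zero, zero_mul] at h
  have hd : (p : ℤ) ∣ (Nat.choose ((r' + 1) * (p - 1)) ((t' + 1) * (p - 1)) : ℤ) :=
    Int.modEq_zero_iff_dvd.mp h
  exact_mod_cast hd

theorem stmt6 (p r : ℕ) (hp : p.Prime) (hodd : Odd p) (hr1 : 1 ≤ r) (hrp : r < p) :
    (p : GaussianInt) ∣ (Gg (r * (p - 1)) p - (1 + Ig ^ (r * (p - 1)))) := by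
  haveI : Fact p.Prime := ⟨hp⟩
  set q : ℕ := p - 1 with hq
  set n : ℕ := r * q with hn
  have hq1 : 1 ≤ q := by have := hp.two_le; omega
  have hn0 : 0 < n := Nat.mul_pos (by omega) hq1
  have hqn : q ∣ n := Dvd.intro_left r rfl
  set c : ℕ → GaussianInt := fun j => if q ∣ j then -1 else 0 with hcdef
  -- power-sum congruences, transported to the Gaussian integers
  have hc : ∀ j : ℕ, (p : GaussianInt) ∣ ((Sps j q : ℤ) : GaussianInt) - c j := by
    intro j
    have h1 : (p : ℤ) ∣ (Sps j q - (if q ∣ j then (-1 : ℤ) else 0)) := by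
      have h := powsum_mod p hp j
      have h' : (((Sps j q - (if q ∣ j then (-1 : ℤ) else 0)) : ℤ) : ZMod p) = 0 := by
        push_cast
        rw [h]
        split <;> simp
      exact (ZMod.intCast_zmod_eq_zero_iff_dvd _ p).mp h'
    have h2 := map_dvd (Int.castRingHom GaussianInt) h1
    simp only [map_sub, map_natCast, eq_intCast] at h2
    convert h2 using 2
    simp only [hcdef]
    split <;> simp
  -- binomial expansion of the Gaussian power sum
  have hA : ∀ k : ℕ, ((Sps k q : ℤ) : GaussianInt)
      = ∑ a ∈ Finset.Icc 1 q, (a : GaussianInt) ^ k := by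
    intro k; unfold Sps; push_cast; rfl
  have hexp : Gg n p = ∑ j ∈ Finset.range (n + 1),
      ((Sps j q : ℤ) : GaussianInt) * ((Sps (n - j) q : ℤ) : GaussianInt) * Ig ^ (n - j)
        * (n.choose j : GaussianInt) := by
    unfold Gg Fg
    calc
      ∑ a ∈ Finset.Icc 1 (p - 1), ∑ b ∈ Finset.Icc 1 (p - 1),
          ((a : GaussianInt) + (b : GaussianInt) * Ig) ^ n
        = ∑ a ∈ Finset.Icc 1 q, ∑ b ∈ Finset.Icc 1 q, ∑ j ∈ Finset.range (n + 1),
            (a : GaussianInt) ^ j * ((b : GaussianInt) * Ig) ^ (n - j)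
              * (n.choose j : GaussianInt) := by
          simp_rw [add_pow]; rfl
      _ = ∑ a ∈ Finset.Icc 1 q, ∑ j ∈ Finset.range (n + 1), ∑ b ∈ Finset.Icc 1 q,
            (a : GaussianInt) ^ j * ((b : GaussianInt) * Ig) ^ (n - j)
              * (n.choose j : GaussianInt) :=
          Finset.sum_congr rfl fun a _ => Finset.sum_comm
      _ = ∑ j ∈ Finset.range (n + 1), ∑ a ∈ Finset.Icc 1 q, ∑ b ∈ Finset.Icc 1 q,
            (a : GaussianInt) ^ j * ((b : GaussianInt) * Ig) ^ (n - j)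
              * (n.choose j : GaussianInt) := Finset.sum_comm
      _ = ∑ j ∈ Finset.range (n + 1),
            ((Sps j q : ℤ) : GaussianInt) * ((Sps (n - j) q : ℤ) : GaussianInt) * Ig ^ (n - j)
              * (n.choose j : GaussianInt) := by
          refine Finset.sum_congr rfl fun j _ => ?_
          rw [hA, hA, Finset.sum_comm]
          simp only [Finset.sum_mul, Finset.mul_sum]
          refine Finset.sum_congr rfl fun a _ => Finset.sum_congr rfl fun b _ => ?_
          rw [mul_pow]; ring
  set T : GaussianInt := ∑ j ∈ Finset.range (n + 1),
      c j * c (n - j) * Ig ^ (n - j) * (n.choose j : GaussianInt) with hT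
  have step1 : (p : GaussianInt) ∣ Gg n p - T := by
    rw [hexp, hT, ← Finset.sum_sub_distrib]
    refine Finset.dvd_sum fun j _ => ?_
    obtain ⟨u, hu⟩ := hc j
    obtain ⟨v, hv⟩ := hc (n - j)
    refine ⟨(u * ((Sps (n - j) q : ℤ) : GaussianInt) + c j * v)
      * (Ig ^ (n - j) * (n.choose j : GaussianInt)), ?_⟩
    linear_combination
      (((Sps (n - j) q : ℤ) : GaussianInt) * (Ig ^ (n - j) * (n.choose j : GaussianInt))) * hu
        + (c j * (Ig ^ (n - j) * (n.choose j : GaussianInt))) * hv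
  have step2 : T = ∑ j ∈ Finset.range (n + 1),
      (if q ∣ j then Ig ^ (n - j) * (n.choose j : GaussianInt) else 0) := by
    rw [hT]
    refine Finset.sum_congr rfl fun j hj => ?_
    have hjn : j ≤ n := Nat.lt_succ_iff.mp (Finset.mem_range.mp hj)
    by_cases h : q ∣ j
    · have h2 : q ∣ n - j := Nat.dvd_sub hqn h
      simp only [hcdef, if_pos h, if_pos h2]
      ring
    · simp [hcdef, h]
  have step3 : (1 : GaussianInt) + Ig ^ n
      = ∑ j ∈ Finset.range (n + 1),
          ((if j = 0 then Ig ^ n else 0) + (if j = n then (1 : GaussianInt) else 0)) := by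
    rw [Finset.sum_add_distrib, Finset.sum_ite_eq' (Finset.range (n + 1)) 0 fun _ => Ig ^ n,
      Finset.sum_ite_eq' (Finset.range (n + 1)) n fun _ => (1 : GaussianInt)]
    rw [if_pos (Finset.mem_range.mpr (by omega)), if_pos (Finset.mem_range.mpr (by omega))]
    ring
  have step4 : (p : GaussianInt) ∣ T - (1 + Ig ^ n) := by
    rw [step2, step3, ← Finset.sum_sub_distrib]
    refine Finset.dvd_sum fun j hj => ?_
    have hjn : j ≤ n := Nat.lt_succ_iff.mp (Finset.mem_range.mp hj)
    by_cases hqj : q ∣ j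
    · rcases eq_or_ne j 0 with rfl | hj0
      · rw [if_pos hqj, if_pos rfl, if_neg (Ne.symm hn0.ne'), Nat.sub_zero,
          Nat.choose_zero_right]
        simp
      · rcases eq_or_ne j n with rfl | hjn'
        · rw [if_pos hqj, if_neg hj0, if_pos rfl, Nat.sub_self, Nat.choose_self]
          simp
        · obtain ⟨t, rfl⟩ := hqj
          have ht0 : 0 < t := by
            rcases Nat.eq_zero_or_pos t with rfl | h; · simp at hj0
            exact h
          have htr : t < r := by
            by_contra hle
            push_neg at hle
            have : n ≤ q * t := by
              rw [hn, mul_comm]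
              exact Nat.mul_le_mul_left q hle
            omega
          have hdvd : p ∣ n.choose (q * t) := by
            rw [hn, mul_comm q t, hq]
            exact lucas_vanish p r t hp ht0 htr hrp
          rw [if_pos ⟨t, rfl⟩, if_neg hj0, if_neg hjn', add_zero, sub_zero]
          exact Dvd.dvd.mul_left (Nat.cast_dvd_cast hdvd) _
    · have hj0 : j ≠ 0 := by rintro rfl; exact hqj (dvd_zero q)
      have hjn' : j ≠ n := by rintro rfl; exact hqj hqn
      rw [if_neg hqj, if_neg hj0, if_neg hjn']
      simp
  have := dvd_add step1 step4
  rwa [sub_add_sub_cancel] at this
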